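/- Let X and Z be {0,1}-valued random variables and Y, W be {0,1}^{t-1}-valued random variables with t ≥ 1, such that X is independent of (Z,W), Z is independent of (X,Y), and both (X,Y) and (Z,W) are distributed as the product distribution U_γ^t (each coordinate independently 1 with probability γ) for some γ ∈ (0,1) with γ ≠ 1/2. Then for any integer q ≥ 2, the probability that X + |Y| ≡ Z + |W| (mod q) is strictly less than 1, where |Y| denotes the Hamming weight of Y. -/

import Mathlib

open Finset

private lemma sum_prod_bool' {R : Type*} [CommSemiring R] (s : ℕ) (f : Bool → R) :
    ∑ y : Fin s → Bool, ∏ j, f (y j) = (f false + f true) ^ s := by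
  induction s with
  | zero => simp
  | succ n ih =>
    rw [← (Fin.consEquiv (fun _ : Fin (n+1) => Bool)).sum_comp, Fintype.sum_prod_type]
    simp only [Fin.consEquiv_apply, Fin.prod_univ_succ, Fin.cons_zero, Fin.cons_succ,
      ← Finset.mul_sum, ih, Fintype.sum_bool, pow_succ]
    ring

private lemma pow_card_eq_prod' {s : ℕ} (ω : ℂ) (v : Fin s → Bool) :
    ω ^ (Finset.univ.filter (fun j => v j = true)).card = ∏ j, if v j = true then ω else 1 := by
  rw [← Finset.prod_filter, Finset.prod_const]

/-- Anticoncentration after coupling, biased case `γ ≠ 1/2`, any modulus `q ≥ 2`. -/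
theorem stmt2 (s : ℕ) (γ : ℝ) (hγ0 : 0 < γ) (hγ1 : γ < 1) (hγ : γ ≠ 1/2)
    (q : ℕ) (hq : 2 ≤ q)
    (μ : Bool × (Fin s → Bool) × Bool × (Fin s → Bool) → ℝ)
    (hnn : ∀ p, 0 ≤ μ p) (hsum : ∑ p, μ p = 1)
    -- X is independent of (Z, W)
    (hXZW : ∀ x z w, (∑ y, μ (x, y, z, w))
      = (∑ y, ∑ z', ∑ w', μ (x, y, z', w')) * (∑ x', ∑ y, μ (x', y, z, w)))
    -- Z is independent of (X, Y)
    (hZXY : ∀ x y z, (∑ w, μ (x, y, z, w))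
      = (∑ z', ∑ w, μ (x, y, z', w)) * (∑ x', ∑ y', ∑ w, μ (x', y', z, w)))
    -- (X, Y) has the γ-biased product distribution
    (hXY : ∀ x y, (∑ z, ∑ w, μ (x, y, z, w))
      = (if x then γ else 1 - γ) * ∏ j, (if y j then γ else 1 - γ))
    -- (Z, W) has the γ-biased product distribution
    (hZW : ∀ z w, (∑ x, ∑ y, μ (x, y, z, w))
      = (if z then γ else 1 - γ) * ∏ j, (if w j then γ else 1 - γ)) :
    ∑ p ∈ Finset.univ.filter
        (fun p : Bool × (Fin s → Bool) × Bool × (Fin s → Bool) =>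
          ((if p.1 then 1 else 0) + (Finset.univ.filter (fun j => p.2.1 j = true)).card) % q
            = ((if p.2.2.1 then 1 else 0)
                + (Finset.univ.filter (fun j => p.2.2.2 j = true)).card) % q),
      μ p < 1 := by
  classical
  set pred : Bool × (Fin s → Bool) × Bool × (Fin s → Bool) → Prop := fun p =>
    ((if p.1 then 1 else 0) + (Finset.univ.filter (fun j => p.2.1 j = true)).card) % q
      = ((if p.2.2.1 then 1 else 0)
          + (Finset.univ.filter (fun j => p.2.2.2 j = true)).card) % q with hpred
  by_contra hcon
  push_neg at hcon
  have hle : ∑ p ∈ Finset.univ.filter pred, μ p ≤ 1 := by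
    rw [← hsum]
    exact Finset.sum_le_sum_of_subset_of_nonneg (Finset.filter_subset _ _)
      (fun i _ _ => hnn i)
  have heq : ∑ p ∈ Finset.univ.filter pred, μ p = 1 := le_antisymm hle hcon
  have hnotsum : ∑ p ∈ Finset.univ.filter (fun p => ¬ pred p), μ p = 0 := by
    have h := Finset.sum_filter_add_sum_filter_not Finset.univ pred μ
    rw [hsum, heq] at h
    linarith
  have hzero : ∀ p, ¬ pred p → μ p = 0 := by
    intro p hp
    exact (Finset.sum_eq_zero_iff_of_nonneg (fun i _ => hnn i)).1 hnotsum p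
      (Finset.mem_filter.2 ⟨Finset.mem_univ _, hp⟩)
  -- notation
  set e : Bool → ℕ := fun b => if b then 1 else 0 with he
  set Wt : (Fin s → Bool) → ℕ := fun v => (Finset.univ.filter (fun j => v j = true)).card with hWt
  set ω : ℂ := Complex.exp (2 * Real.pi * Complex.I / q) with hω
  have hq0 : q ≠ 0 := by omega
  have hprim : IsPrimitiveRoot ω q := Complex.isPrimitiveRoot_exp q hq0
  have hω1 : ω ≠ 1 := hprim.ne_one (by omega)
  have hωq : ω ^ q = 1 := hprim.pow_eq_one
  have hpowmod : ∀ n : ℕ, ω ^ n = ω ^ (n % q) := fun n => pow_eq_pow_mod n hωq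
  have habs : ‖ω‖ = 1 := Complex.norm_eq_one_of_pow_eq_one hωq hq0
  set c : ℂ := (1 - γ : ℂ) + γ * ω with hc
  have hcne : c ≠ 0 := by
    intro h0
    have h1 : (γ : ℂ) * ω = (γ - 1 : ℝ) := by push_cast; linear_combination h0
    have h2 : ‖(γ : ℂ) * ω‖ = ‖((γ - 1 : ℝ) : ℂ)‖ := by rw [h1]
    rw [norm_mul, habs, Complex.norm_real, Complex.norm_real, Real.norm_eq_abs, Real.norm_eq_abs] at h2
    rw [abs_of_pos hγ0, abs_of_neg (by linarith)] at h2
    apply hγ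
    linarith
  have hcpow : c ^ s ≠ 0 := pow_ne_zero _ hcne
  -- sum of the product weights is 1
  have hsum1 : ∑ y : Fin s → Bool, ∏ j, (if y j then γ else 1 - γ) = 1 := by
    rw [sum_prod_bool' s (fun b => if b then γ else 1 - γ)]
    norm_num
  -- complex weight sum
  have hcw : ∀ ν : ℂ, (∑ v : Fin s → Bool,
      ((∏ j, (if v j then γ else 1 - γ) : ℝ) : ℂ) * ν ^ (Wt v))
      = ((1 - γ : ℂ) + γ * ν) ^ s := by
    intro ν
    have h1 := sum_prod_bool' s (fun b => (if b then (γ : ℂ) else 1 - γ) * (if b then ν else 1))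
    simp only [if_true, if_false, Bool.false_eq_true] at h1
    rw [show ((1 - γ : ℂ) + γ * ν) = (1 - ↑γ) * 1 + ↑γ * ν by ring, ← h1]
    refine Finset.sum_congr rfl fun v _ => ?_
    rw [Finset.prod_mul_distrib]
    have h2 : ((∏ j, (if v j then γ else 1 - γ) : ℝ) : ℂ)
        = ∏ j, (if v j then (γ : ℂ) else 1 - γ) := by
      push_cast [apply_ite (fun r : ℝ => (r : ℂ))]
      rfl
    rw [h2, hWt, pow_card_eq_prod']
  -- X marginal
  have hXmarg : ∀ x, (∑ y, ∑ z', ∑ w', μ (x, y, z', w')) = (if x then γ else 1 - γ) := by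
    intro x
    simp_rw [hXY x]
    rw [← Finset.mul_sum, hsum1, mul_one]
  -- joint of (Y-summed) factorizes
  have hyzw : ∀ x z w, (∑ y, μ (x, y, z, w))
      = (if x then γ else 1 - γ) *
        ((if z then γ else 1 - γ) * ∏ j, (if w j then γ else 1 - γ)) := by
    intro x z w
    rw [hXZW x z w, hXmarg x, hZW z w]
  -- the key identity for each x
  have key : ∀ x : Bool,
      ((if x then γ else 1 - γ : ℝ) : ℂ) * (ω ^ e x * c ^ s)
        = ((if x then γ else 1 - γ : ℝ) : ℂ) * (c * c ^ s) := by
    intro x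
    have way1 : (∑ y, ∑ z, ∑ w, (μ (x, y, z, w) : ℂ) * ω ^ (e z + Wt w))
        = ((if x then γ else 1 - γ : ℝ) : ℂ) * (ω ^ e x * c ^ s) := by
      have hA : ∀ (y : Fin s → Bool) (z : Bool) (w : Fin s → Bool),
          (μ (x, y, z, w) : ℂ) * ω ^ (e z + Wt w)
            = (μ (x, y, z, w) : ℂ) * ω ^ (e x + Wt y) := by
        intro y z w
        by_cases hμ : μ (x, y, z, w) = 0
        · rw [hμ]; simp
        · have hp : pred (x, y, z, w) := by
            by_contra hnp
            exact hμ (hzero _ hnp)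
          have : (e x + Wt y) % q = (e z + Wt w) % q := hp
          rw [hpowmod (e z + Wt w), hpowmod (e x + Wt y), this]
      simp_rw [hA, ← Finset.sum_mul]
      have hXYc : ∀ y, (∑ z, ∑ w, (μ (x, y, z, w) : ℂ))
          = (((if x then γ else 1 - γ) * ∏ j, (if y j then γ else 1 - γ) : ℝ) : ℂ) := by
        intro y
        rw [← hXY x y]
        push_cast
        rfl
      simp_rw [hXYc, pow_add]
      have step : ∑ y : Fin s → Bool,
          (((if x then γ else 1 - γ) * ∏ j, (if y j then γ else 1 - γ) : ℝ) : ℂ)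
            * (ω ^ e x * ω ^ Wt y)
          = ((if x then γ else 1 - γ : ℝ) : ℂ) * ω ^ e x *
              ∑ y : Fin s → Bool, ((∏ j, (if y j then γ else 1 - γ) : ℝ) : ℂ) * ω ^ Wt y := by
        rw [Finset.mul_sum]
        exact Finset.sum_congr rfl fun y _ => by push_cast; ring
      rw [step, hcw ω, ← hc]
      ring
    have way2 : (∑ y, ∑ z, ∑ w, (μ (x, y, z, w) : ℂ) * ω ^ (e z + Wt w))
        = ((if x then γ else 1 - γ : ℝ) : ℂ) * (c * c ^ s) := by
      rw [Finset.sum_comm]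
      have hswap : ∀ z : Bool, (∑ y : Fin s → Bool, ∑ w : Fin s → Bool,
          (μ (x, y, z, w) : ℂ) * ω ^ (e z + Wt w))
          = ∑ w : Fin s → Bool, ∑ y : Fin s → Bool,
            (μ (x, y, z, w) : ℂ) * ω ^ (e z + Wt w) := fun z => Finset.sum_comm
      simp_rw [hswap, ← Finset.sum_mul]
      have hyzwc : ∀ z w, (∑ y, (μ (x, y, z, w) : ℂ))
          = (((if x then γ else 1 - γ) *
              ((if z then γ else 1 - γ) * ∏ j, (if w j then γ else 1 - γ)) : ℝ) : ℂ) := by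
        intro z w
        rw [← hyzw x z w]
        push_cast
        rfl
      simp_rw [hyzwc, pow_add]
      have step2 : ∀ z : Bool, ∑ w : Fin s → Bool,
          (((if x then γ else 1 - γ) *
              ((if z then γ else 1 - γ) * ∏ j, (if w j then γ else 1 - γ)) : ℝ) : ℂ)
            * (ω ^ e z * ω ^ Wt w)
          = (((if x then γ else 1 - γ) * (if z then γ else 1 - γ) : ℝ) : ℂ) * ω ^ e z *
              ∑ w : Fin s → Bool, ((∏ j, (if w j then γ else 1 - γ) : ℝ) : ℂ) * ω ^ Wt w := by
        intro z
        rw [Finset.mul_sum]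
        exact Finset.sum_congr rfl fun w _ => by push_cast; ring
      simp_rw [step2, hcw ω, ← hc, Fintype.sum_bool]
      simp only [if_true, if_false, Bool.false_eq_true, he]
      push_cast
      rw [hc]
      ring
    rw [← way1, way2]
  -- conclude: from x = false, c = 1; from x = true, ω = c; so ω = 1
  have hfalse := key false
  have htrue := key true
  simp only [if_false, Bool.false_eq_true, if_true, he] at hfalse htrue
  have h1γ : ((1 - γ : ℝ) : ℂ) ≠ 0 := by
    simp only [ne_eq, Complex.ofReal_eq_zero]
    intro h; linarith
  have hγc : ((γ : ℝ) : ℂ) ≠ 0 := by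
    simp only [ne_eq, Complex.ofReal_eq_zero]
    intro h; linarith
  have hc1 : c = 1 := by
    have := mul_left_cancel₀ h1γ hfalse
    rw [pow_zero, one_mul] at this
    exact (mul_right_cancel₀ hcpow (by rw [one_mul]; exact this)).symm
  have hωc : ω = c := by
    have := mul_left_cancel₀ hγc htrue
    rw [pow_one] at this
    exact mul_right_cancel₀ hcpow this
  exact hω1 (hωc.trans hc1)
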